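/- Let Γ be a finite abelian group, H ≤ Γ, and β = ⊕_{j=1}^N β_j^{k_j} a finite-dimensional H-module with β_j pairwise distinct characters of H. Let α be a character of Γ and J = {j : α|_H = β_j}. Then the restriction morphism π_α from (Ind_H^Γ End(β))^Γ ≅ ⊕_{j=1}^N M_{k_j}(ℂ) to End(p_α Ind_H^Γ(β))^Γ has kernel isomorphic to ⊕_{j ∉ J} M_{k_j}(ℂ) and image isomorphic to ⊕_{j ∈ J} M_{k_j}(ℂ). -/

import Mathlib

/- STATEMENT 16: Let Γ be a finite abelian group, H ≤ Γ, β = ⊕_{j=1}^N β_j^{k_j} with β_j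
pairwise distinct characters of H, α a character of Γ, and J = {j : α|_H = β_j}.  The algebra
(Ind_H^Γ End(β))^Γ ≅ End(β)^H acts on p_α Ind_H^Γ(β) (pointwise, in the function model), and
this restriction morphism π_α has kernel ≅ ⊕_{j ∉ J} M_{k_j}(ℂ) and image ≅ ⊕_{j ∈ J}
M_{k_j}(ℂ) under the canonical isomorphism End(β)^H ≅ ⊕_j M_{k_j}(ℂ).  Concretely: there is an
algebra isomorphism e : End(β)^H ≅ Π_j M_{k_j}(ℂ) (given by taking blocks) such that two
elements T, T' have the same image under π_α if and only if their blocks e T j and e T' j agree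
for all j ∈ J. -/

noncomputable section

variable (Γ : Type) [CommGroup Γ] [Fintype Γ] (H : Subgroup Γ)
  (N : ℕ) (k : Fin N → ℕ) (β : Fin N → (H →* ℂˣ)) (α : Γ →* ℂˣ)

/-- The space of `β = ⊕_j β_j^{k_j}`. -/
abbrev VB := ∀ j : Fin N, Fin (k j) → ℂ

/-- The action of `H` on `β`. -/
def actB (h : H) : VB N k →ₗ[ℂ] VB N k where
  toFun v := fun j i => (β j h : ℂ) * v j i
  map_add' := by intro x y; funext j i; simp [mul_add]
  map_smul' := by intro c x; funext j i; simp; ring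

/-- The algebra `End(β)^H ≅ (Ind_H^Γ End(β))^Γ` of `H`-equivariant endomorphisms. -/
def EndHB : Subalgebra ℂ (Module.End ℂ (VB N k)) where
  carrier := {T : Module.End ℂ (VB N k) | ∀ (h : H) (v : VB N k), T (actB Γ H N k β h v) = actB Γ H N k β h (T v)}
  add_mem' := by
    intro a b ha hb h v
    simp only [LinearMap.add_apply, ha h v, hb h v, map_add]
  mul_mem' := by
    intro a b ha hb h v
    simp only [Module.End.mul_apply, hb h v, ha h (b v)]
  algebraMap_mem' := by
    intro c h v
    simp [Module.algebraMap_end_apply, map_smul]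

/-- The isotypical component `p_α Ind_H^Γ(β)` in the function model of the induced
representation. -/
def WalphaB : Set (Γ → VB N k) :=
  {f | (∀ (h : H) (g : Γ), f (g * (h : Γ)) = actB Γ H N k β h (f g)) ∧
    ∀ γ g : Γ, f (g * γ) = (α γ : ℂ) • f g}

section Aux

/-- standard basis vectors of `VB`. -/
def ejb (j : Fin N) (b : Fin (k j)) : VB N k := Pi.single j (Pi.single b 1)

lemma v_decomp (v : VB N k) : v = ∑ j, ∑ b, v j b • ejb N k j b := by
  funext j a
  simp only [Finset.sum_apply, Pi.smul_apply, ejb, smul_eq_mul]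
  rw [Finset.sum_eq_single j]
  · simp only [Pi.single_eq_same]
    rw [Finset.sum_eq_single a]
    · simp
    · intro b _ hb; simp [Pi.single_eq_of_ne (Ne.symm hb)]
    · simp
  · intro j' _ hj'
    simp [Pi.single_eq_of_ne (Ne.symm hj')]
  · simp

lemma exists_ne_val {j' j : Fin N} (hne : β j' ≠ β j) :
    ∃ h : H, ((β j') h : ℂ) ≠ ((β j) h : ℂ) := by
  by_contra hc
  push_neg at hc
  exact hne (MonoidHom.ext fun h => Units.ext (hc h))

lemma actB_ejb (h : H) (j : Fin N) (b : Fin (k j)) :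
    actB Γ H N k β h (ejb N k j b) = ((β j) h : ℂ) • ejb N k j b := by
  funext j' i
  show ((β j') h : ℂ) * (ejb N k j b j' i) = _
  by_cases hj : j' = j
  · subst hj; simp
  · simp [ejb, Pi.single_eq_of_ne hj]

lemma cross {T : Module.End ℂ (VB N k)} (hT : T ∈ EndHB Γ H N k β)
    {j' j : Fin N} (hne : β j' ≠ β j) (b : Fin (k j')) (a : Fin (k j)) :
    T (ejb N k j' b) j a = 0 := by
  obtain ⟨h, hh⟩ := exists_ne_val Γ H N β hne
  have key := hT h (ejb N k j' b)
  rw [actB_ejb, map_smul] at key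
  have key2 := congrFun (congrFun key j) a
  have : ((β j') h : ℂ) * T (ejb N k j' b) j a = ((β j) h : ℂ) * T (ejb N k j' b) j a := key2
  by_contra hx
  exact hh (mul_right_cancel₀ hx this)

lemma block {T : Module.End ℂ (VB N k)} (hdist : ∀ i j, i ≠ j → β i ≠ β j)
    (hT : T ∈ EndHB Γ H N k β) (v : VB N k) (j : Fin N) (a : Fin (k j)) :
    T v j a = ∑ b, T (ejb N k j b) j a * v j b := by
  conv_lhs => rw [v_decomp N k v]
  rw [map_sum]
  simp only [map_sum, map_smul]
  rw [Finset.sum_apply, Finset.sum_apply, Finset.sum_eq_single j]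
  · simp only [Finset.sum_apply, Pi.smul_apply, smul_eq_mul]
    exact Finset.sum_congr rfl fun b _ => mul_comm _ _
  · intro j' _ hj'
    simp only [Finset.sum_apply, Pi.smul_apply, smul_eq_mul]
    apply Finset.sum_eq_zero
    intro b _
    rw [cross Γ H N k β hT (hdist j' j hj') b a, mul_zero]
  · simp

/-- the linear map given by block matrices. -/
def ofMat (M : ∀ j, Matrix (Fin (k j)) (Fin (k j)) ℂ) : Module.End ℂ (VB N k) where
  toFun v := fun j a => ∑ b, M j a b * v j b
  map_add' x y := by
    funext j a
    simp [mul_add, Finset.sum_add_distrib]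
  map_smul' c x := by
    funext j a
    simp [Finset.mul_sum]
    apply Finset.sum_congr rfl
    intro b _; ring

lemma ofMat_mem (M : ∀ j, Matrix (Fin (k j)) (Fin (k j)) ℂ) :
    ofMat N k M ∈ EndHB Γ H N k β := by
  intro h v
  funext j a
  show (∑ b, M j a b * (((β j) h : ℂ) * v j b)) = ((β j) h : ℂ) * ∑ b, M j a b * v j b
  rw [Finset.mul_sum]
  apply Finset.sum_congr rfl
  intro b _; ring

lemma ofMat_ejb (M : ∀ j, Matrix (Fin (k j)) (Fin (k j)) ℂ) (j : Fin N)
    (a b : Fin (k j)) : ofMat N k M (ejb N k j b) j a = M j a b := by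
  show (∑ c, M j a c * (ejb N k j b j c)) = M j a b
  rw [Finset.sum_eq_single b]
  · simp [ejb]
  · intro c _ hc; simp [ejb, Pi.single_eq_of_ne hc]
  · simp [ejb]

end Aux

/-- The block-decomposition algebra isomorphism. -/
def eAlg (hdist : ∀ i j, i ≠ j → β i ≠ β j) :
    ↥(EndHB Γ H N k β) ≃ₐ[ℂ] ((j : Fin N) → Matrix (Fin (k j)) (Fin (k j)) ℂ) where
  toFun T := fun j => Matrix.of fun a b => (T : Module.End ℂ (VB N k)) (ejb N k j b) j a
  invFun M := ⟨ofMat N k M, ofMat_mem Γ H N k β M⟩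
  left_inv T := by
    apply Subtype.ext
    apply LinearMap.ext
    intro v
    funext j a
    show (∑ b, (T : Module.End ℂ (VB N k)) (ejb N k j b) j a * v j b) = _
    exact (block Γ H N k β hdist T.2 v j a).symm
  right_inv M := by
    funext j
    ext a b
    exact ofMat_ejb N k M j a b
  map_mul' T T' := by
    funext j
    ext a b
    rw [Pi.mul_apply, Matrix.mul_apply]
    show (T : Module.End ℂ (VB N k)) ((T' : Module.End ℂ (VB N k)) (ejb N k j b)) j a = _
    rw [block Γ H N k β hdist T.2 ((T' : Module.End ℂ (VB N k)) (ejb N k j b)) j a]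
    rfl
  map_add' T T' := by
    funext j
    ext a b
    show ((T : Module.End ℂ (VB N k)) + (T' : Module.End ℂ (VB N k))) (ejb N k j b) j a = _
    simp [Matrix.add_apply]
  commutes' c := by
    funext j
    ext a b
    show (algebraMap ℂ (Module.End ℂ (VB N k)) c) (ejb N k j b) j a = _
    simp only [Module.algebraMap_end_apply, Pi.smul_apply, smul_eq_mul]
    have : (algebraMap ℂ ((j : Fin N) → Matrix (Fin (k j)) (Fin (k j)) ℂ) c) j a b
        = c * (1 : Matrix (Fin (k j)) (Fin (k j)) ℂ) a b := by
      simp [Algebra.algebraMap_eq_smul_one]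
    rw [this, Matrix.one_apply]
    by_cases hab : a = b
    · subst hab; simp [ejb]
    · simp [ejb, Pi.single_eq_of_ne hab, hab]

lemma eAlg_apply (hdist : ∀ i j, i ≠ j → β i ≠ β j) (T : ↥(EndHB Γ H N k β))
    (j : Fin N) (a b : Fin (k j)) :
    eAlg Γ H N k β hdist T j a b = (T : Module.End ℂ (VB N k)) (ejb N k j b) j a := rfl

theorem stmt16 (hk : ∀ j, 0 < k j) (hdist : ∀ i j, i ≠ j → β i ≠ β j) :
    ∃ e : ↥(EndHB Γ H N k β) ≃ₐ[ℂ] ((j : Fin N) → Matrix (Fin (k j)) (Fin (k j)) ℂ),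
      -- e is the canonical block-decomposition isomorphism End(β)^H ≅ ⊕_j M_{k_j}(ℂ):
      (∀ (T : ↥(EndHB Γ H N k β)) (j : Fin N) (a b : Fin (k j)),
        e T j a b = (T : Module.End ℂ (VB N k)) (Pi.single j (Pi.single b (1 : ℂ))) j a) ∧
      -- π_α: End(β)^H acts pointwise on p_α Ind_H^Γ(β):
      (∀ T : ↥(EndHB Γ H N k β), ∀ f ∈ WalphaB Γ H N k β α,
        (fun g => (T : Module.End ℂ (VB N k)) (f g)) ∈ WalphaB Γ H N k β α) ∧
      -- π_α T = π_α T' iff the blocks of T and T' agree over J = {j : α|_H = β_j};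
      -- equivalently, ker π_α ≅ ⊕_{j ∉ J} M_{k_j}(ℂ) and im π_α ≅ ⊕_{j ∈ J} M_{k_j}(ℂ):
      (∀ T T' : ↥(EndHB Γ H N k β),
        (∀ f ∈ WalphaB Γ H N k β α, ∀ g : Γ,
            (T : Module.End ℂ (VB N k)) (f g) = (T' : Module.End ℂ (VB N k)) (f g)) ↔
        (∀ j : Fin N, (∀ h : H, α (h : Γ) = β j h) → e T j = e T' j)) := by
  refine ⟨eAlg Γ H N k β hdist, fun T j a b => rfl, ?_, ?_⟩
  · -- π_α well-defined
    intro T f hf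
    constructor
    · intro h g
      show (T : Module.End ℂ (VB N k)) (f (g * h)) = _
      rw [hf.1 h g]
      exact T.2 h (f g)
    · intro γ g
      show (T : Module.End ℂ (VB N k)) (f (g * γ)) = _
      rw [hf.2 γ g, map_smul]
  · -- kernel/image characterization
    intro T T'
    constructor
    · intro hTT' j hj
      ext a b
      rw [eAlg_apply, eAlg_apply]
      have hval : ∀ h : H, (α (h : Γ) : ℂ) = ((β j) h : ℂ) := fun h =>
        congrArg Units.val (hj h)
      set f : Γ → VB N k := fun g => ((α g : ℂ)) • ejb N k j b with hfdef
      have hf : f ∈ WalphaB Γ H N k β α := by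
        constructor
        · intro h g
          show ((α (g * (h : Γ)) : ℂ)) • ejb N k j b = actB Γ H N k β h (f g)
          rw [hfdef]
          simp only [map_smul, actB_ejb Γ H N k β h j b, map_mul, Units.val_mul,
            hval h, mul_smul]
        · intro γ g
          show ((α (g * γ) : ℂ)) • ejb N k j b = (α γ : ℂ) • f g
          rw [hfdef]
          simp only [map_mul, Units.val_mul, mul_smul]
          rw [smul_comm]
      have key := hTT' f hf 1
      have hf1 : f 1 = ejb N k j b := by simp [hfdef]
      rw [hf1] at key
      exact congrFun (congrFun key j) a
    · intro hJ f hf g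
      funext j a
      rw [block Γ H N k β hdist T.2 (f g) j a, block Γ H N k β hdist T'.2 (f g) j a]
      by_cases hj : ∀ h : H, α (h : Γ) = β j h
      · have hblk := hJ j hj
        refine Finset.sum_congr rfl fun b _ => ?_
        have h1 := congrFun (congrFun hblk a) b
        rw [eAlg_apply, eAlg_apply] at h1
        exact congrArg (· * f g j b) h1
      · push_neg at hj
        obtain ⟨h, hh⟩ := hj
        have hval : (α (h : Γ) : ℂ) ≠ ((β j) h : ℂ) := fun heq => hh (Units.ext heq)
        have hfg : f g j = 0 := by
          funext b
          have h1 := congrFun (congrFun (hf.1 h g) j) b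
          have h2 := congrFun (congrFun (hf.2 (h : Γ) g) j) b
          have e1 : ((β j) h : ℂ) * f g j b = (α (h : Γ) : ℂ) * f g j b := by
            have h1' : f (g * (h : Γ)) j b = ((β j) h : ℂ) * f g j b := h1
            have h2' : f (g * (h : Γ)) j b = (α (h : Γ) : ℂ) * f g j b := h2
            rw [← h1', h2']
          by_contra hx
          exact hval (mul_right_cancel₀ hx e1.symm)
        rw [hfg]
        simp

end
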